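/- Let n ≥ 1, let ε ∈ ℝⁿ, Γ, Σ ∈ S_n, let T : S_n → ℝⁿ be a linear map with adjoint T† : ℝⁿ → S_n (i.e. β·T(R) = ⟨T†(β), R⟩ for all β, R), let Ψ : S_n → S_n be a self-adjoint linear operator, and let c ∈ ℝ. Define Q(α, β, R) := c − 2 εᵀβ − ⟨Γ, R⟩ + α² + α⟨Σ, R⟩ + βᵀΣβ + βᵀT(R) + ⟨R, Ψ(R)⟩/4 on ℝ × ℝⁿ × S_n. Suppose Σ is positive definite and the self-adjoint operator G := Ψ − Σ⟨Σ, ·⟩ − T† ∘ Σ⁻¹ ∘ T on S_n is positive definite. Then Q has a unique global minimizer (α⋄, β⋄, R⋄), given by R⋄ = 2 G⁻¹(Γ − T†(Σ⁻¹ε)), β⋄ = Σ⁻¹(ε − T(R⋄)/2) and α⋄ = −⟨Σ, R⋄⟩/2. -/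

import Mathlib

open Matrix

/-- Theorem 1 of the paper: mean square optimal quadratic approximation of the
Hamiltonian, stated at the level of the moment data `ε, Γ, Σ, T, Ψ`.  The
quadratic cost `Q` has a unique global minimizer over `ℝ × ℝⁿ × S_n`, and the
minimizer `(α⋄, β⋄, R⋄)` satisfies `G(R⋄) = 2(Γ − T†(Σ⁻¹ε))`
(i.e. `R⋄ = 2 G⁻¹(Γ − T†(Σ⁻¹ε))`), `β⋄ = Σ⁻¹(ε − T(R⋄)/2)` and
`α⋄ = −⟨Σ, R⋄⟩/2`. -/
theorem mean_square_optimal_quadratic_approximation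
    {n : ℕ} (hn : 1 ≤ n)
    (ε : Fin n → ℝ) (Γ Sgm : Matrix (Fin n) (Fin n) ℝ)
    (hΓ : Γ.IsSymm) (hSgmSymm : Sgm.IsSymm)
    (T : Matrix (Fin n) (Fin n) ℝ →ₗ[ℝ] (Fin n → ℝ))
    (Tdag : (Fin n → ℝ) →ₗ[ℝ] Matrix (Fin n) (Fin n) ℝ)
    (hTdagSymm : ∀ β : Fin n → ℝ, (Tdag β).IsSymm)
    (hTdag : ∀ (β : Fin n → ℝ) (R : Matrix (Fin n) (Fin n) ℝ), R.IsSymm →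
      β ⬝ᵥ T R = (Tdag β * R).trace)
    (Ψ : Matrix (Fin n) (Fin n) ℝ →ₗ[ℝ] Matrix (Fin n) (Fin n) ℝ)
    (hΨsymm : ∀ R : Matrix (Fin n) (Fin n) ℝ, R.IsSymm → (Ψ R).IsSymm)
    (hΨsa : ∀ X Y : Matrix (Fin n) (Fin n) ℝ, X.IsSymm → Y.IsSymm →
      (X * Ψ Y).trace = (Ψ X * Y).trace)
    (c : ℝ)
    (Q : ℝ → (Fin n → ℝ) → Matrix (Fin n) (Fin n) ℝ → ℝ)
    (hQ : ∀ (α : ℝ) (β : Fin n → ℝ) (R : Matrix (Fin n) (Fin n) ℝ),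
      Q α β R = c - 2 * (ε ⬝ᵥ β) - (Γ * R).trace + α ^ 2
        + α * (Sgm * R).trace + β ⬝ᵥ (Sgm *ᵥ β) + β ⬝ᵥ T R
        + (R * Ψ R).trace / 4)
    (G : Matrix (Fin n) (Fin n) ℝ → Matrix (Fin n) (Fin n) ℝ)
    (hG : ∀ R : Matrix (Fin n) (Fin n) ℝ,
      G R = Ψ R - (Sgm * R).trace • Sgm - Tdag (Sgm⁻¹ *ᵥ T R))
    (hSgmPd : Sgm.PosDef)
    (hGpd : ∀ R : Matrix (Fin n) (Fin n) ℝ, R.IsSymm → R ≠ 0 →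
      0 < (R * G R).trace) :
    (∃! p : ℝ × (Fin n → ℝ) × Matrix (Fin n) (Fin n) ℝ,
      p.2.2.IsSymm ∧
      ∀ q : ℝ × (Fin n → ℝ) × Matrix (Fin n) (Fin n) ℝ,
        q.2.2.IsSymm → Q p.1 p.2.1 p.2.2 ≤ Q q.1 q.2.1 q.2.2) ∧
    (∀ p : ℝ × (Fin n → ℝ) × Matrix (Fin n) (Fin n) ℝ,
      p.2.2.IsSymm →
      (∀ q : ℝ × (Fin n → ℝ) × Matrix (Fin n) (Fin n) ℝ,
        q.2.2.IsSymm → Q p.1 p.2.1 p.2.2 ≤ Q q.1 q.2.1 q.2.2) →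
      G p.2.2 = (2 : ℝ) • (Γ - Tdag (Sgm⁻¹ *ᵥ ε)) ∧
      p.2.1 = Sgm⁻¹ *ᵥ (ε - (1 / 2 : ℝ) • T p.2.2) ∧
      p.1 = -(Sgm * p.2.2).trace / 2) := by
  classical
  -- basic facts about Sgm
  have hSunit : IsUnit Sgm.det := hSgmPd.det_pos.ne'.isUnit
  have hinv1 : ∀ v : Fin n → ℝ, Sgm *ᵥ (Sgm⁻¹ *ᵥ v) = v := by
    intro v
    rw [Matrix.mulVec_mulVec, Matrix.mul_nonsing_inv Sgm hSunit, Matrix.one_mulVec]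
  have hSinv : (Sgm⁻¹).IsSymm := by
    unfold Matrix.IsSymm
    rw [Matrix.transpose_nonsing_inv, hSgmSymm]
  have dotsym : ∀ (A : Matrix (Fin n) (Fin n) ℝ), A.IsSymm →
      ∀ v w : Fin n → ℝ, v ⬝ᵥ A *ᵥ w = w ⬝ᵥ A *ᵥ v := by
    intro A hA v w
    rw [dotProduct_mulVec, ← mulVec_transpose, hA, dotProduct_comm]
  have hSpos : ∀ v : Fin n → ℝ, v ≠ 0 → 0 < v ⬝ᵥ Sgm *ᵥ v := by
    intro v hv; simpa using hSgmPd.dotProduct_mulVec_pos hv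
  have hSnn : ∀ v : Fin n → ℝ, 0 ≤ v ⬝ᵥ Sgm *ᵥ v := by
    intro v
    rcases eq_or_ne v 0 with h | h
    · simp [h]
    · exact (hSpos v h).le
  -- G as a linear map
  have hGadd : ∀ X Y, G (X + Y) = G X + G Y := by
    intro X Y
    simp only [hG, Matrix.mul_add, Matrix.trace_add, add_smul, map_add, Matrix.mulVec_add]
    abel
  have hGsmul : ∀ (a : ℝ) X, G (a • X) = a • G X := by
    intro a X
    simp only [hG, Matrix.mul_smul, Matrix.trace_smul, LinearMap.map_smul,
      Matrix.mulVec_smul, smul_sub, smul_smul, smul_eq_mul]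
  set Gl : Matrix (Fin n) (Fin n) ℝ →ₗ[ℝ] Matrix (Fin n) (Fin n) ℝ :=
    { toFun := G, map_add' := hGadd, map_smul' := hGsmul } with hGldef
  have hGlG : ∀ R, Gl R = G R := fun _ => rfl
  have hGsub : ∀ X Y, G (X - Y) = G X - G Y := by
    intro X Y
    have := map_sub Gl X Y
    simpa [hGlG] using this
  -- G preserves symmetry
  have hGsymm : ∀ R : Matrix (Fin n) (Fin n) ℝ, R.IsSymm → (G R).IsSymm := by
    intro R hR
    rw [hG]
    exact ((hΨsymm R hR).sub (hSgmSymm.smul _)).sub (hTdagSymm _)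
  -- the submodule of symmetric matrices
  set Sub : Submodule ℝ (Matrix (Fin n) (Fin n) ℝ) :=
    { carrier := {R | R.IsSymm}
      add_mem' := fun ha hb => ha.add hb
      zero_mem' := Matrix.isSymm_zero
      smul_mem' := fun t _ hx => hx.smul t } with hSubdef
  have hGmem : ∀ x ∈ Sub, Gl x ∈ Sub := fun x hx => hGsymm x hx
  have hGrinj : Function.Injective (Gl.restrict hGmem) := by
    rw [← LinearMap.ker_eq_bot, LinearMap.ker_eq_bot']
    intro m hm
    by_contra hne
    have hm0 : G m.1 = 0 := congrArg Subtype.val hm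
    have hm1 : (m : Matrix (Fin n) (Fin n) ℝ) ≠ 0 := fun h0 => hne (Subtype.ext h0)
    have := hGpd m.1 m.2 hm1
    rw [hm0] at this
    simp at this
  have hGrsurj : Function.Surjective (Gl.restrict hGmem) :=
    LinearMap.injective_iff_surjective.mp hGrinj
  -- the target matrix D and the optimal R
  set D : Matrix (Fin n) (Fin n) ℝ := Γ - Tdag (Sgm⁻¹ *ᵥ ε) with hDdef
  have hDsymm : D.IsSymm := hΓ.sub (hTdagSymm _)
  have hDmem : ((2 : ℝ) • D) ∈ Sub := hDsymm.smul 2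
  obtain ⟨Rs, hRs⟩ := hGrsurj ⟨(2 : ℝ) • D, hDmem⟩
  set R₀ : Matrix (Fin n) (Fin n) ℝ := Rs.1 with hR₀def
  have hR₀symm : R₀.IsSymm := Rs.2
  have hGR₀ : G R₀ = (2 : ℝ) • D := congrArg Subtype.val hRs
  -- trace pairing facts
  have hTd' : ∀ (β : Fin n → ℝ) (R : Matrix (Fin n) (Fin n) ℝ), R.IsSymm →
      (R * Tdag β).trace = β ⬝ᵥ T R := by
    intro β R hR
    rw [Matrix.trace_mul_comm, ← hTdag β R hR]
  -- basic expansion lemmas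
  have hbeta : ∀ (β : Fin n → ℝ) (R : Matrix (Fin n) (Fin n) ℝ),
      (β - Sgm⁻¹ *ᵥ (ε - (1 / 2 : ℝ) • T R)) ⬝ᵥ Sgm *ᵥ (β - Sgm⁻¹ *ᵥ (ε - (1 / 2 : ℝ) • T R))
      = β ⬝ᵥ Sgm *ᵥ β - 2 * (ε ⬝ᵥ β) + β ⬝ᵥ T R
        + (ε - (1 / 2 : ℝ) • T R) ⬝ᵥ Sgm⁻¹ *ᵥ (ε - (1 / 2 : ℝ) • T R) := by
    intro β R
    obtain ⟨u, hu⟩ : ∃ u, u = ε - (1 / 2 : ℝ) • T R := ⟨_, rfl⟩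
    rw [← hu]
    obtain ⟨w, hw⟩ : ∃ w, w = Sgm⁻¹ *ᵥ u := ⟨_, rfl⟩
    rw [← hw]
    have h1 : Sgm *ᵥ w = u := by rw [hw]; exact hinv1 u
    have h2 : w ⬝ᵥ Sgm *ᵥ β = β ⬝ᵥ u := by
      rw [dotsym _ hSgmSymm, h1]
    have h3 : β ⬝ᵥ u = ε ⬝ᵥ β - (β ⬝ᵥ T R) / 2 := by
      rw [hu, dotProduct_sub, dotProduct_smul, dotProduct_comm β ε]
      simp only [smul_eq_mul]
      ring
    have h4 : w ⬝ᵥ u = u ⬝ᵥ w := dotProduct_comm _ _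
    rw [Matrix.mulVec_sub, h1, sub_dotProduct, dotProduct_sub, dotProduct_sub,
      h2, h4, h3]
    ring
  have hu2 : ∀ R : Matrix (Fin n) (Fin n) ℝ,
      (ε - (1 / 2 : ℝ) • T R) ⬝ᵥ Sgm⁻¹ *ᵥ (ε - (1 / 2 : ℝ) • T R)
      = ε ⬝ᵥ Sgm⁻¹ *ᵥ ε - ε ⬝ᵥ Sgm⁻¹ *ᵥ T R + (T R ⬝ᵥ Sgm⁻¹ *ᵥ T R) / 4 := by
    intro R
    have hc : T R ⬝ᵥ Sgm⁻¹ *ᵥ ε = ε ⬝ᵥ Sgm⁻¹ *ᵥ T R := dotsym _ hSinv _ _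
    simp only [Matrix.mulVec_sub, Matrix.mulVec_smul, sub_dotProduct, dotProduct_sub,
      smul_dotProduct, dotProduct_smul, smul_eq_mul]
    rw [hc]
    ring
  have hDR : ∀ R : Matrix (Fin n) (Fin n) ℝ, R.IsSymm →
      (D * R).trace = (Γ * R).trace - ε ⬝ᵥ Sgm⁻¹ *ᵥ T R := by
    intro R hR
    rw [hDdef, Matrix.sub_mul, Matrix.trace_sub, ← hTdag _ R hR,
      dotProduct_comm, dotsym _ hSinv]
  have hRG : ∀ R : Matrix (Fin n) (Fin n) ℝ, R.IsSymm →
      (R * G R).trace = (R * Ψ R).trace - (Sgm * R).trace ^ 2 - T R ⬝ᵥ Sgm⁻¹ *ᵥ T R := by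
    intro R hR
    rw [hG, Matrix.mul_sub, Matrix.mul_sub, Matrix.trace_sub, Matrix.trace_sub,
      Matrix.mul_smul, Matrix.trace_smul, hTd' _ R hR, Matrix.trace_mul_comm R Sgm]
    rw [dotProduct_comm]
    simp only [smul_eq_mul]
    ring
  have hGsa : ∀ X Y : Matrix (Fin n) (Fin n) ℝ, X.IsSymm → Y.IsSymm →
      (X * G Y).trace = (Y * G X).trace := by
    intro X Y hX hY
    rw [hG, hG, Matrix.mul_sub, Matrix.mul_sub, Matrix.mul_sub, Matrix.mul_sub,
      Matrix.trace_sub, Matrix.trace_sub, Matrix.trace_sub, Matrix.trace_sub,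
      Matrix.mul_smul, Matrix.mul_smul, Matrix.trace_smul, Matrix.trace_smul,
      hTd' _ X hX, hTd' _ Y hY, hΨsa X Y hX hY, Matrix.trace_mul_comm (Ψ X) Y,
      Matrix.trace_mul_comm X Sgm, Matrix.trace_mul_comm Y Sgm]
    have hc : T X ⬝ᵥ Sgm⁻¹ *ᵥ T Y = T Y ⬝ᵥ Sgm⁻¹ *ᵥ T X := dotsym _ hSinv _ _
    rw [dotProduct_comm (Sgm⁻¹ *ᵥ T Y) (T X), dotProduct_comm (Sgm⁻¹ *ᵥ T X) (T Y), hc]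
    simp only [smul_eq_mul]
    ring
  have hshift : ∀ R : Matrix (Fin n) (Fin n) ℝ, R.IsSymm →
      ((R - R₀) * G (R - R₀)).trace
      = (R * G R).trace - 4 * (D * R).trace + 2 * (D * R₀).trace := by
    intro R hR
    have e1 : (R * G R₀).trace = 2 * (D * R).trace := by
      rw [hGR₀, Matrix.mul_smul, Matrix.trace_smul, Matrix.trace_mul_comm R D]
      simp [smul_eq_mul]
    have e2 : (R₀ * G R).trace = 2 * (D * R).trace := by
      rw [hGsa R₀ R hR₀symm hR, e1]
    have e3 : (R₀ * G R₀).trace = 2 * (D * R₀).trace := by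
      rw [hGR₀, Matrix.mul_smul, Matrix.trace_smul, Matrix.trace_mul_comm R₀ D]
      simp [smul_eq_mul]
    rw [hGsub, Matrix.mul_sub, Matrix.sub_mul, Matrix.sub_mul, Matrix.trace_sub,
      Matrix.trace_sub, Matrix.trace_sub, e1, e2, e3]
    ring
  -- the key "completion of squares" identity
  have key : ∀ (α : ℝ) (β : Fin n → ℝ) (R : Matrix (Fin n) (Fin n) ℝ), R.IsSymm →
      Q α β R = (c - ε ⬝ᵥ Sgm⁻¹ *ᵥ ε - (D * R₀).trace / 2)
        + (α + (Sgm * R).trace / 2) ^ 2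
        + (β - Sgm⁻¹ *ᵥ (ε - (1 / 2 : ℝ) • T R)) ⬝ᵥ
            Sgm *ᵥ (β - Sgm⁻¹ *ᵥ (ε - (1 / 2 : ℝ) • T R))
        + ((R - R₀) * G (R - R₀)).trace / 4 := by
    intro α β R hR
    rw [hQ]
    linear_combination (-1 : ℝ) * hbeta β R - hu2 R - (1/4 : ℝ) * hshift R hR
      - (1/4 : ℝ) * hRG R hR + hDR R hR
  -- the candidate minimizer
  set α₀ : ℝ := -(Sgm * R₀).trace / 2 with hα₀def
  set β₀ : Fin n → ℝ := Sgm⁻¹ *ᵥ (ε - (1 / 2 : ℝ) • T R₀) with hβ₀def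
  set K : ℝ := c - ε ⬝ᵥ Sgm⁻¹ *ᵥ ε - (D * R₀).trace / 2 with hKdef
  have hQopt : Q α₀ β₀ R₀ = K := by
    rw [key α₀ β₀ R₀ hR₀symm]
    have e1 : α₀ + (Sgm * R₀).trace / 2 = 0 := by rw [hα₀def]; ring
    have e2 : β₀ - Sgm⁻¹ *ᵥ (ε - (1 / 2 : ℝ) • T R₀) = 0 := by rw [hβ₀def, sub_self]
    rw [e1, e2, sub_self]
    simp
  have htr3 : ∀ R : Matrix (Fin n) (Fin n) ℝ, R.IsSymm →
      0 ≤ ((R - R₀) * G (R - R₀)).trace := by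
    intro R hR
    rcases eq_or_ne (R - R₀) 0 with h | h
    · simp [h]
    · exact (hGpd (R - R₀) (hR.sub hR₀symm) h).le
  have hminQ : ∀ q : ℝ × (Fin n → ℝ) × Matrix (Fin n) (Fin n) ℝ,
      q.2.2.IsSymm → K ≤ Q q.1 q.2.1 q.2.2 := by
    intro q hq
    rw [key q.1 q.2.1 q.2.2 hq]
    have t1 : (0:ℝ) ≤ (q.1 + (Sgm * q.2.2).trace / 2) ^ 2 := sq_nonneg _
    have t2 := hSnn (q.2.1 - Sgm⁻¹ *ᵥ (ε - (1 / 2 : ℝ) • T q.2.2))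
    have t3 := htr3 q.2.2 hq
    linarith
  have hmin : ∀ q : ℝ × (Fin n → ℝ) × Matrix (Fin n) (Fin n) ℝ,
      q.2.2.IsSymm → Q α₀ β₀ R₀ ≤ Q q.1 q.2.1 q.2.2 := by
    intro q hq
    rw [hQopt]
    exact hminQ q hq
  -- characterization of minimizers
  have hchar : ∀ p : ℝ × (Fin n → ℝ) × Matrix (Fin n) (Fin n) ℝ, p.2.2.IsSymm →
      (∀ q : ℝ × (Fin n → ℝ) × Matrix (Fin n) (Fin n) ℝ,
        q.2.2.IsSymm → Q p.1 p.2.1 p.2.2 ≤ Q q.1 q.2.1 q.2.2) →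
      p.2.2 = R₀ ∧ p.2.1 = Sgm⁻¹ *ᵥ (ε - (1 / 2 : ℝ) • T p.2.2) ∧
        p.1 = -(Sgm * p.2.2).trace / 2 := by
    intro p hp hpmin
    have hle : Q p.1 p.2.1 p.2.2 ≤ K := by
      have := hpmin (α₀, β₀, R₀) hR₀symm
      rw [hQopt] at this
      exact this
    rw [key p.1 p.2.1 p.2.2 hp] at hle
    have t1 : (0:ℝ) ≤ (p.1 + (Sgm * p.2.2).trace / 2) ^ 2 := sq_nonneg _
    have t2 := hSnn (p.2.1 - Sgm⁻¹ *ᵥ (ε - (1 / 2 : ℝ) • T p.2.2))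
    have t3 := htr3 p.2.2 hp
    have z1 : (p.1 + (Sgm * p.2.2).trace / 2) ^ 2 = 0 := by linarith
    have z2 : (p.2.1 - Sgm⁻¹ *ᵥ (ε - (1 / 2 : ℝ) • T p.2.2)) ⬝ᵥ
        Sgm *ᵥ (p.2.1 - Sgm⁻¹ *ᵥ (ε - (1 / 2 : ℝ) • T p.2.2)) = 0 := by linarith
    have z3 : ((p.2.2 - R₀) * G (p.2.2 - R₀)).trace = 0 := by linarith
    refine ⟨?_, ?_, ?_⟩
    · by_contra h
      have hne : p.2.2 - R₀ ≠ 0 := fun h0 => h (sub_eq_zero.mp h0)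
      exact absurd z3 (hGpd (p.2.2 - R₀) (hp.sub hR₀symm) hne).ne'
    · have hv : p.2.1 - Sgm⁻¹ *ᵥ (ε - (1 / 2 : ℝ) • T p.2.2) = 0 := by
        by_contra h
        exact absurd z2 (hSpos _ h).ne'
      exact sub_eq_zero.mp hv
    · have := sq_eq_zero_iff.mp z1
      linarith
  constructor
  · refine ⟨(α₀, β₀, R₀), ⟨hR₀symm, hmin⟩, ?_⟩
    rintro q ⟨hq, hqmin⟩
    obtain ⟨h1, h2, h3⟩ := hchar q hq hqmin
    have hq2 : q.2.1 = β₀ := by rw [h2, h1, hβ₀def]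
    have hq1 : q.1 = α₀ := by rw [h3, h1, hα₀def]
    exact Prod.ext hq1 (Prod.ext hq2 h1)
  · intro p hp hpmin
    obtain ⟨h1, h2, h3⟩ := hchar p hp hpmin
    refine ⟨?_, h2, h3⟩
    rw [h1, hGR₀, hDdef]
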